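/- If (x_n) is a left K-Cauchy sequence in (Σ^∞, q_b) such that for each n there exists m > n with x_n a strict prefix of x_m (for all n beyond some index n_1 at which the sequence becomes prefix-increasing), then the supremum x = ⊔{x_n : n ≥ n_1} in the prefix order exists, has infinite length, and is the Yoneda-limit of (x_n). -/

import Mathlib

open scoped NNReal ENNReal

attribute [local instance] Classical.propDecidable

universe u

structure QuasiMetric (X : Type u) where
  d : X → X → ℝ≥0
  eq_iff : ∀ x y, (d x y = 0 ∧ d y x = 0) ↔ x = y
  triangle : ∀ x y z, d x y ≤ d x z + d z y

/-- The order on formal balls: `(x,r) ⊑ (y,s)` iff `d x y ≤ r - s` (real subtraction). -/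
def BallLE {X : Type u} (d : X → X → ℝ≥0) (b c : X × ℝ≥0) : Prop :=
  (d b.1 c.1 : ℝ) ≤ (b.2 : ℝ) - (c.2 : ℝ)

def IsUpperBound {β : Type*} (le : β → β → Prop) (D : Set β) (u : β) : Prop :=
  ∀ a ∈ D, le a u

def IsLub' {β : Type*} (le : β → β → Prop) (D : Set β) (u : β) : Prop :=
  IsUpperBound le D u ∧ ∀ v, IsUpperBound le D v → le u v

def DirectedSubset {β : Type*} (le : β → β → Prop) (D : Set β) : Prop :=
  D.Nonempty ∧ ∀ a ∈ D, ∀ b ∈ D, ∃ c ∈ D, le a c ∧ le b c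

/-- `a` is way below `b`. -/
def WayBelow {β : Type*} (le : β → β → Prop) (a b : β) : Prop :=
  ∀ D : Set β, DirectedSubset le D → ∀ s, IsLub' le D s → le b s → ∃ u ∈ D, le a u

def LeftKCauchyNet {X : Type u} {Λ : Type*} (d : X → X → ℝ≥0) (le : Λ → Λ → Prop)
    (f : Λ → X) : Prop :=
  ∀ ε : ℝ≥0, 0 < ε → ∃ a, ∀ b c, le a b → le b c → d (f b) (f c) < ε

/-- `x` is a Yoneda-limit of the net `f`: for all `y`, `d x y = inf_a sup_{b ≥ a} d (f b) y`
(computed in `ℝ≥0∞` so that the inf/sup always exist). -/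
def IsYonedaLimit {X : Type u} {Λ : Type*} (d : X → X → ℝ≥0) (le : Λ → Λ → Prop)
    (f : Λ → X) (x : X) : Prop :=
  ∀ y, (d x y : ℝ≥0∞) = ⨅ a : Λ, ⨆ b : Λ, ⨆ _ : le a b, (d (f b) y : ℝ≥0∞)

/-- Finite and infinite words over `α`: partial functions on `ℕ` with downward-closed domain. -/
def Word (α : Type u) : Type u := {f : ℕ → Option α // ∀ n, f n = none → f (n + 1) = none}

def emptyWord (α : Type u) : Word α := ⟨fun _ => none, fun _ _ => rfl⟩

/-- The prefix order on words. -/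
def wpre {α : Type u} (x y : Word α) : Prop := ∀ n a, x.1 n = some a → y.1 n = some a

/-- The length of a word, in `ℕ∞`. -/
noncomputable def wlen {α : Type u} (x : Word α) : ℕ∞ := ⨅ n ∈ {n : ℕ | x.1 n = none}, (n : ℕ∞)

/-- `pw n = 2^{-n}`, with `2^{-∞} = 0`. -/
noncomputable def pw (n : ℕ∞) : ℝ≥0 := if n = ⊤ then 0 else (2 : ℝ≥0)⁻¹ ^ n.toNat

/-- The balanced quasi-metric on words. -/
noncomputable def qb {α : Type u} (x y : Word α) : ℝ≥0 :=
  if wpre x y then pw (wlen x) - pw (wlen y) else 1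

-- auxiliary lemmas
lemma word_none_mono {α : Type u} (x : Word α) {j k : ℕ} (h : j ≤ k) (hj : x.1 j = none) :
    x.1 k = none := by
  induction k with
  | zero => exact Nat.le_zero.mp h ▸ hj
  | succ k ih =>
    rcases Nat.lt_or_ge j (k+1) with h' | h'
    · exact x.2 k (ih (by omega))
    · have : j = k + 1 := by omega
      subst this; exact hj

lemma word_some_mono {α : Type u} (x : Word α) {j k : ℕ} (h : j ≤ k) (hk : x.1 k ≠ none) :
    x.1 j ≠ none := fun hj => hk (word_none_mono x h hj)

lemma wlen_le_of_none {α : Type u} {x : Word α} {n : ℕ} (h : x.1 n = none) :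
    wlen x ≤ (n : ℕ∞) := by
  exact iInf₂_le n h

lemma lt_wlen_iff {α : Type u} {x : Word α} {k : ℕ} :
    (k : ℕ∞) < wlen x ↔ x.1 k ≠ none := by
  constructor
  · intro h hk
    exact absurd (wlen_le_of_none hk) (not_le_of_gt h)
  · intro h
    have : ((k+1 : ℕ) : ℕ∞) ≤ wlen x := by
      refine le_iInf₂ fun m hm => ?_
      have : k < m := by
        by_contra hc
        exact h (word_none_mono x (by omega) hm)
      exact_mod_cast Nat.succ_le_of_lt this
    calc (k : ℕ∞) < ((k+1 : ℕ) : ℕ∞) := by exact_mod_cast Nat.lt_succ_self k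
    _ ≤ wlen x := this

lemma wlen_eq_top_iff {α : Type u} {x : Word α} : wlen x = ⊤ ↔ ∀ n, x.1 n ≠ none := by
  constructor
  · intro h n hn
    have := wlen_le_of_none hn
    rw [h] at this
    exact absurd (top_le_iff.mp this) (by simp)
  · intro h
    exact top_le_iff.mp (le_iInf₂ fun m hm => absurd hm (h m))

lemma wpre_wlen_le {α : Type u} {x y : Word α} (h : wpre x y) : wlen x ≤ wlen y := by
  refine le_iInf₂ fun n hn => ?_
  refine wlen_le_of_none ?_
  cases hx : x.1 n with
  | none => rfl
  | some a => exact absurd (h n a hx) (by rw [hn]; simp)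

lemma pw_le_one (n : ℕ∞) : pw n ≤ 1 := by
  unfold pw
  split
  · exact zero_le_one
  · exact pow_le_one₀ zero_le (by norm_num)

lemma pw_antitone {m n : ℕ∞} (h : m ≤ n) : pw n ≤ pw m := by
  unfold pw
  rcases eq_or_ne n ⊤ with hn | hn
  · simp [hn]
  · have hm : m ≠ ⊤ := fun hm => hn (top_le_iff.mp (hm ▸ h))
    simp only [hn, hm, if_false]
    refine pow_le_pow_of_le_one zero_le (by norm_num) ?_
    exact_mod_cast ENat.toNat_le_toNat h hn

lemma qb_le_one {α : Type u} (x y : Word α) : qb x y ≤ 1 := by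
  unfold qb
  split
  · exact le_trans tsub_le_self (pw_le_one _)
  · exact le_rfl

lemma wpre_trans {α : Type u} {x y z : Word α} (h1 : wpre x y) (h2 : wpre y z) : wpre x z :=
  fun n a hn => h2 n a (h1 n a hn)

theorem stmt8 {α : Type u} (f : ℕ → Word α) (n₁ : ℕ)
    (hC : LeftKCauchyNet qb (· ≤ ·) f)
    (hpre : ∀ n m, n₁ ≤ n → n ≤ m → wpre (f n) (f m))
    (hstr : ∀ n, n₁ ≤ n → ∃ m, n < m ∧ wpre (f n) (f m) ∧ f n ≠ f m) :
    ∃ x : Word α, IsLub' wpre {w | ∃ n, n₁ ≤ n ∧ w = f n} x ∧ wlen x = ⊤ ∧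
      IsYonedaLimit qb (· ≤ ·) f x := by
  -- consistency of values
  have hcons : ∀ (k n m : ℕ) (a b : α), n₁ ≤ n → n₁ ≤ m →
      (f n).1 k = some a → (f m).1 k = some b → a = b := by
    intro k n m a b hn hm ha hb
    rcases le_total n m with h | h
    · have := hpre n m hn h k a ha
      rw [hb] at this; exact (Option.some_inj.mp this).symm
    · have := hpre m n hm h k b hb
      rw [ha] at this; exact Option.some_inj.mp this
  -- the supremum word
  set g : ℕ → Option α := fun k =>
    if h : ∃ n, n₁ ≤ n ∧ (f n).1 k ≠ none then (f h.choose).1 k else none with hg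
  have hgsome : ∀ k c, g k = some c ↔ ∃ n, n₁ ≤ n ∧ (f n).1 k = some c := by
    intro k c
    constructor
    · intro hk
      rw [hg] at hk
      simp only at hk
      split at hk
      · next h => exact ⟨h.choose, h.choose_spec.1, hk⟩
      · exact absurd hk (by simp)
    · rintro ⟨n, hn, hnk⟩
      have hex : ∃ n, n₁ ≤ n ∧ (f n).1 k ≠ none := ⟨n, hn, by rw [hnk]; simp⟩
      rw [hg]
      simp only [dif_pos hex]
      cases hck : (f hex.choose).1 k with
      | none => exact absurd hck hex.choose_spec.2
      | some c' =>
        rw [hcons k hex.choose n c' c hex.choose_spec.1 hn hck hnk]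
  have hgdown : ∀ k, g k = none → g (k + 1) = none := by
    intro k hk
    rw [hg]
    simp only
    rw [dif_neg]
    rintro ⟨n, hn, hnk⟩
    have : (f n).1 k ≠ none := word_some_mono _ (by omega) hnk
    have hex : ∃ n, n₁ ≤ n ∧ (f n).1 k ≠ none := ⟨n, hn, this⟩
    rw [hg] at hk
    simp only [dif_pos hex] at hk
    exact hex.choose_spec.2 hk
  set x : Word α := ⟨g, hgdown⟩ with hxdef
  -- strictness consequence
  have hstrict : ∀ n, n₁ ≤ n → ∃ m k', n < m ∧ (f n).1 k' = none ∧ (f m).1 k' ≠ none := by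
    intro n hn
    obtain ⟨m, hnm, hp, hne⟩ := hstr n hn
    have : ∃ k', (f n).1 k' ≠ (f m).1 k' := by
      by_contra hc
      push_neg at hc
      exact hne (Subtype.ext (funext hc))
    obtain ⟨k', hk'⟩ := this
    refine ⟨m, k', hnm, ?_, ?_⟩
    · cases hnk : (f n).1 k' with
      | none => rfl
      | some a => exact absurd (hp k' a hnk) (fun h => hk' (hnk.trans h.symm))
    · cases hnk : (f n).1 k' with
      | none => rw [hnk] at hk'; exact fun h => hk' h.symm
      | some a => exact absurd (hp k' a hnk) (fun h => hk' (hnk.trans h.symm))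
  -- every position is eventually filled
  have hall : ∀ k, ∃ n, n₁ ≤ n ∧ (f n).1 k ≠ none := by
    intro k
    induction k with
    | zero =>
      obtain ⟨m, k', hnm, _, hmk⟩ := hstrict n₁ le_rfl
      exact ⟨m, by omega, word_some_mono _ (Nat.zero_le _) hmk⟩
    | succ k ih =>
      obtain ⟨n, hn, hk⟩ := ih
      by_cases h : (f n).1 (k + 1) = none
      · obtain ⟨m, k', hnm, h1, h2⟩ := hstrict n hn
        have hkk' : k < k' := by
          by_contra hc
          exact hk (word_none_mono _ (by omega) h1)
        exact ⟨m, by omega, word_some_mono _ (by omega) h2⟩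
      · exact ⟨n, hn, h⟩
  have hxsome : ∀ k, x.1 k ≠ none := by
    intro k
    obtain ⟨n, hn, hk⟩ := hall k
    obtain ⟨c, hc⟩ := Option.ne_none_iff_exists'.mp hk
    show g k ≠ none
    rw [(hgsome k c).mpr ⟨n, hn, hc⟩]
    simp
  have hwlenx : wlen x = ⊤ := wlen_eq_top_iff.mpr hxsome
  -- x is an upper bound
  have hub : ∀ n, n₁ ≤ n → wpre (f n) x := by
    intro n hn k a hk
    exact (hgsome k a).mpr ⟨n, hn, hk⟩
  refine ⟨x, ⟨?_, ?_⟩, hwlenx, ?_⟩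
  · rintro w ⟨n, hn, rfl⟩
    exact hub n hn
  · intro v hv k a hk
    obtain ⟨n, hn, hnk⟩ := (hgsome k a).mp hk
    exact hv (f n) ⟨n, hn, rfl⟩ k a hnk
  · intro y
    by_cases hxy : wpre x y
    · -- qb x y = 0
      have hL : qb x y = 0 := by
        rw [qb, if_pos hxy, hwlenx]
        simp [pw, zero_tsub]
      rw [hL]
      symm
      simp only [ENNReal.coe_zero]
      refine le_antisymm ?_ zero_le
      -- bounded by pw (k+1) for every k
      have h0 : ∀ k : ℕ, (⨅ a : ℕ, ⨆ b : ℕ, ⨆ _ : a ≤ b, (qb (f b) y : ℝ≥0∞))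
          ≤ ((pw ((k : ℕ) : ℕ∞) : ℝ≥0) : ℝ≥0∞) := by
        intro k
        obtain ⟨n, hn, hk⟩ := hall k
        refine iInf_le_of_le n (iSup₂_le fun b hb => ?_)
        have hnb : wpre (f n) (f b) := hpre n b hn hb
        have hby : wpre (f b) y := wpre_trans (hub b (le_trans hn hb)) hxy
        have : qb (f b) y ≤ pw ((k : ℕ) : ℕ∞) := by
          rw [qb, if_pos hby]
          refine le_trans tsub_le_self ?_
          refine le_trans (pw_antitone (wpre_wlen_le hnb)) ?_
          exact pw_antitone (le_of_lt (lt_wlen_iff.mpr hk))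
        exact_mod_cast this
      by_contra hc
      push_neg at hc
      have hne : (⨅ a : ℕ, ⨆ b : ℕ, ⨆ _ : a ≤ b, (qb (f b) y : ℝ≥0∞)) ≠ 0 := by
        intro h; rw [h] at hc; exact absurd le_rfl (not_le_of_gt hc)
      obtain ⟨k, hk⟩ := ENNReal.exists_inv_two_pow_lt hne
      have := h0 k
      have hpwk : ((pw ((k : ℕ) : ℕ∞) : ℝ≥0) : ℝ≥0∞) = 2⁻¹ ^ k := by
        simp [pw, ENNReal.inv_pow]
      rw [hpwk] at this
      exact absurd (lt_of_le_of_lt this hk) (lt_irrefl _)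
    · -- qb x y = 1
      have hL : qb x y = 1 := by rw [qb, if_neg hxy]
      rw [hL]
      symm
      refine le_antisymm ?_ ?_
      · refine iInf_le_of_le 0 (iSup₂_le fun b _ => ?_)
        exact_mod_cast qb_le_one (f b) y
      · refine le_iInf fun a => ?_
        -- find a disagreement position
        rw [wpre] at hxy
        push_neg at hxy
        obtain ⟨k, c, hxk, hyk⟩ := hxy
        obtain ⟨n, hn, hnk⟩ := (hgsome k c).mp hxk
        set b := max a n with hb
        have hfb : (f b).1 k = some c := hpre n b hn (le_max_right a n) k c hnk
        have hnp : ¬ wpre (f b) y := fun h => hyk (h k c hfb)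
        have : qb (f b) y = 1 := by rw [qb, if_neg hnp]
        refine le_trans ?_ (le_iSup₂_of_le b (le_max_left a n) le_rfl)
        rw [this]
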